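/- Let S²T*⊗T_v* denote the real vector space of trilinear forms B : V × V × V → ℝ that are symmetric in the first two arguments (B(X,Y,Z) = B(Y,X,Z)) and semi-basic in the third argument. For B in this space define (σ_J B)(X,Y,Z) = B(X,JY,Z) − B(X,JZ,Y) and (σ_h B)(X,Y,Z) = B(X,hY,Z) − B(X,hZ,Y), and let g² = { B ∈ S²T*⊗T_v* : σ_J B = 0 and σ_h B = 0 }. Then the dimension of g² over ℝ equals (n+1)²(n+2)/2. (This is the computation of the dimension of the kernel g²(P) of the first prolongation σ²(P) of the symbol of the operator P = (d_J, d_h).) -/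

import Mathlib

open Module

/-- Model of the tangent space of `J¹π` at a point: `V = ℝ^{n+1} × ℝ^n`, the first
factor spanned by the horizontal vectors `e_0, …, e_n` (`e_0` the time direction),
the second by the vertical vectors `f_1, …, f_n` (here `f_k = fbase ⟨k-1,_⟩`). -/
abbrev Vv (n : ℕ) : Type := (Fin (n + 1) → ℝ) × (Fin n → ℝ)

/-- A vector of `V` is vertical if it lies in the span of `f_1, …, f_n`,
i.e. its first component vanishes. -/
def IsVert {n : ℕ} (v : Vv n) : Prop := v.1 = 0

/-- The vertical endomorphism `J : V → V`: `J e_0 = 0`, `J e_i = f_i` (1 ≤ i ≤ n),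
`J f_i = 0`. -/
noncomputable def Jv (n : ℕ) : Vv n →ₗ[ℝ] Vv n :=
  LinearMap.prod 0
    ((LinearMap.funLeft ℝ ℝ Fin.succ).comp (LinearMap.fst ℝ (Fin (n + 1) → ℝ) (Fin n → ℝ)))

/-- The horizontal projector `h : V → V`: `h e_α = e_α` (0 ≤ α ≤ n), `h f_i = 0`. -/
noncomputable def Hv (n : ℕ) : Vv n →ₗ[ℝ] Vv n :=
  LinearMap.prod (LinearMap.fst ℝ (Fin (n + 1) → ℝ) (Fin n → ℝ)) 0

set_option maxSynthPendingDepth 3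
set_option synthInstance.maxHeartbeats 400000

/-- `g²(P)`: trilinear forms `B` on `V` symmetric in the first two arguments,
semi-basic in the third argument, and with `σ_J B = 0` and `σ_h B = 0`, where
`(σ_K B)(X,Y,Z) = B(X,KY,Z) − B(X,KZ,Y)`. -/
noncomputable def g2 (n : ℕ) : Submodule ℝ (Vv n →ₗ[ℝ] Vv n →ₗ[ℝ] Vv n →ₗ[ℝ] ℝ) where
  carrier := { B | (∀ X Y Z, B X Y Z = B Y X Z) ∧
    (∀ X Y v, IsVert v → B X Y v = 0) ∧
    (∀ X Y Z, B X (Jv n Y) Z = B X (Jv n Z) Y) ∧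
    (∀ X Y Z, B X (Hv n Y) Z = B X (Hv n Z) Y) }
  add_mem' := by
    rintro A B ⟨a1, a2, a3, a4⟩ ⟨b1, b2, b3, b4⟩
    refine ⟨fun X Y Z => ?_, fun X Y v hv => ?_, fun X Y Z => ?_, fun X Y Z => ?_⟩
    · simp only [LinearMap.add_apply]; rw [a1, b1]
    · simp [a2 X Y v hv, b2 X Y v hv]
    · simp only [LinearMap.add_apply]; rw [a3, b3]
    · simp only [LinearMap.add_apply]; rw [a4, b4]
  zero_mem' := by
    refine ⟨fun X Y Z => ?_, fun X Y v hv => ?_, fun X Y Z => ?_, fun X Y Z => ?_⟩ <;> simp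
  smul_mem' := by
    rintro c A ⟨a1, a2, a3, a4⟩
    refine ⟨fun X Y Z => ?_, fun X Y v hv => ?_, fun X Y Z => ?_, fun X Y Z => ?_⟩
    · simp only [LinearMap.smul_apply, smul_eq_mul]; rw [a1]
    · simp [a2 X Y v hv]
    · simp only [LinearMap.smul_apply, smul_eq_mul]; rw [a3]
    · simp only [LinearMap.smul_apply, smul_eq_mul]; rw [a4]

/-- fully symmetric functions on triples -/
def Sym3 (m : ℕ) : Submodule ℝ (Fin m → Fin m → Fin m → ℝ) where
  carrier := {f | (∀ a b c, f a b c = f b a c) ∧ (∀ a b c, f a b c = f a c b)}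
  add_mem' := by rintro f g ⟨f1, f2⟩ ⟨g1, g2⟩; exact ⟨fun a b c => by simp [f1 a b c, g1 a b c],
    fun a b c => by simp [f2 a b c, g2 a b c]⟩
  zero_mem' := ⟨fun _ _ _ => rfl, fun _ _ _ => rfl⟩
  smul_mem' := by rintro r f ⟨f1, f2⟩; exact ⟨fun a b c => by simp [f1 a b c],
    fun a b c => by simp [f2 a b c]⟩

abbrev DT (m : ℕ) : Type := {t : Fin m × Fin m × Fin m // t.1 ≤ t.2.1 ∧ t.2.1 ≤ t.2.2}

lemma sort_len {m : ℕ} (s : Sym (Fin m) 3) : (Multiset.sort s.1 (·≤·)).length = 3 := by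
  rw [Multiset.length_sort]; exact s.2

noncomputable def symToD {m : ℕ} (s : Sym (Fin m) 3) : DT m :=
  ⟨((Multiset.sort s.1 (·≤·)).get ⟨0, by rw [sort_len]; omega⟩,
    (Multiset.sort s.1 (·≤·)).get ⟨1, by rw [sort_len]; omega⟩,
    (Multiset.sort s.1 (·≤·)).get ⟨2, by rw [sort_len]; omega⟩),
   ⟨(Multiset.pairwise_sort s.1 (·≤·)).rel_get_of_lt (Fin.mk_lt_mk.mpr (by omega)),
    (Multiset.pairwise_sort s.1 (·≤·)).rel_get_of_lt (Fin.mk_lt_mk.mpr (by omega))⟩⟩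

def dToSym {m : ℕ} (d : DT m) : Sym (Fin m) 3 := ⟨{d.1.1, d.1.2.1, d.1.2.2}, rfl⟩

lemma get_eq3 {α : Type*} {l : List α} {a b c : α} (h : l = [a, b, c]) :
    ∀ (h0 : 0 < l.length) (h1 : 1 < l.length) (h2 : 2 < l.length),
      l.get ⟨0, h0⟩ = a ∧ l.get ⟨1, h1⟩ = b ∧ l.get ⟨2, h2⟩ = c := by
  subst h; exact fun _ _ _ => ⟨rfl, rfl, rfl⟩

lemma sort_of_sorted {m : ℕ} (a b c : Fin m) (hab : a ≤ b) (hbc : b ≤ c) :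
    Multiset.sort ({a, b, c} : Multiset (Fin m)) (·≤·) = [a, b, c] := by
  apply List.Perm.eq_of_pairwise' (l₂ := [a,b,c]) (Multiset.pairwise_sort _ _) ?_ ?_
  · simp [List.pairwise_cons, hab, hbc, le_trans hab hbc]
  · rw [← Multiset.coe_eq_coe]
    rw [Multiset.sort_eq]
    rfl

noncomputable def eDT (m : ℕ) : Sym (Fin m) 3 ≃ DT m where
  toFun := symToD
  invFun := dToSym
  left_inv := by
    intro s
    obtain ⟨a, b, c, h⟩ := List.length_eq_three.mp (sort_len s)
    apply Subtype.ext
    show ({_, _, _} : Multiset _) = s.1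
    simp only [symToD]
    rw [(get_eq3 h _ _ _).1, (get_eq3 h _ _ _).2.1, (get_eq3 h _ _ _).2.2,
      ← Multiset.sort_eq s.1 (·≤·), h]
    · rfl
    all_goals rw [h]; simp
  right_inv := by
    rintro ⟨⟨a, b, c⟩, hab, hbc⟩
    apply Subtype.ext
    have h := sort_of_sorted a b c hab hbc
    show (_, _, _) = _
    have h' : Multiset.sort (dToSym ⟨(a, b, c), hab, hbc⟩).1 (·≤·) = [a, b, c] := h
    simp only [symToD]
    rw [(get_eq3 h' _ _ _).1, (get_eq3 h' _ _ _).2.1, (get_eq3 h' _ _ _).2.2]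
    all_goals rw [h']; simp

lemma card_DT (m : ℕ) : Fintype.card (DT m) = (m + 2).choose 3 := by
  rw [← Fintype.card_congr (eDT m), Sym.card_sym_eq_choose]; simp

noncomputable def F3 {m : ℕ} : Sym3 m →ₗ[ℝ] (DT m → ℝ) where
  toFun f := fun d => f.1 d.1.1 d.1.2.1 d.1.2.2
  map_add' f g := rfl
  map_smul' r f := rfl

lemma F3_bij {m : ℕ} : Function.Bijective (F3 (m := m)) := by
  constructor
  · rw [injective_iff_map_eq_zero]
    rintro ⟨f, s12, s23⟩ hf
    have hz : ∀ a b c, a ≤ b → b ≤ c → f a b c = 0 := fun a b c h1 h2 =>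
      congrFun hf ⟨(a, b, c), h1, h2⟩
    have s13 : ∀ a b c, f a b c = f c b a := fun a b c => by
      rw [s23, s12, s23]
    apply Subtype.ext
    funext a b c
    show f a b c = 0
    rcases le_total a b with h1 | h1 <;> rcases le_total b c with h2 | h2 <;>
      rcases le_total a c with h3 | h3
    · exact hz a b c h1 h2
    · exact hz a b c h1 h2
    · rw [s23]; exact hz a c b h3 h2
    · rw [s23, s12]; exact hz c a b h3 h1
    · rw [s12]; exact hz b a c h1 h3
    · rw [s12, s23]; exact hz b c a h2 h3
    · rw [s12]; exact hz b a c h1 h3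
    · rw [s13]; exact hz c b a h2 h1
  · intro g
    refine ⟨⟨fun a b c => g (eDT m ⟨{a, b, c}, rfl⟩), ?_, ?_⟩, ?_⟩
    · intro a b c
      apply congrArg g; apply congrArg (eDT m); apply Subtype.ext
      show ({a, b, c} : Multiset _) = {b, a, c}
      simp only [Multiset.insert_eq_cons]
      exact Multiset.cons_swap a b _
    · intro a b c
      apply congrArg g; apply congrArg (eDT m); apply Subtype.ext
      show ({a, b, c} : Multiset _) = {a, c, b}
      simp only [Multiset.insert_eq_cons, ← Multiset.cons_zero]
      exact congrArg (a ::ₘ ·) (Multiset.cons_swap b c 0)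
    · funext d
      show g (eDT m ⟨{d.1.1, d.1.2.1, d.1.2.2}, rfl⟩) = g d
      congr 1
      have : (⟨{d.1.1, d.1.2.1, d.1.2.2}, rfl⟩ : Sym (Fin m) 3) = (eDT m).symm d := rfl
      rw [this, Equiv.apply_symm_apply]

lemma finrank_Sym3 (m : ℕ) : Module.finrank ℝ (Sym3 m) = (m + 2).choose 3 := by
  rw [(LinearEquiv.ofBijective F3 F3_bij).finrank_eq, Module.finrank_fintype_fun_eq_card,
    card_DT]

lemma choose3 (k : ℕ) : (k+3).choose 3 * 6 = (k+3)*(k+2)*(k+1) := by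
  have h := Nat.choose_mul_factorial_mul_factorial (show 3 ≤ k+3 by omega)
  have h2 : k + 3 - 3 = k := by omega
  rw [h2] at h
  have h3 : (k+3).factorial = (k+3)*(k+2)*(k+1)*k.factorial := by
    rw [show k+3 = (k+2)+1 from rfl, Nat.factorial_succ, show k+2 = (k+1)+1 from rfl,
      Nat.factorial_succ, Nat.factorial_succ]
    ring
  apply Nat.eq_of_mul_eq_mul_right (Nat.factorial_pos k)
  calc (k+3).choose 3 * 6 * k.factorial = (k+3).choose 3 * Nat.factorial 3 * k.factorial := by norm_num [Nat.factorial]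
    _ = (k+3).factorial := h
    _ = (k+3)*(k+2)*(k+1)*k.factorial := h3

lemma arith (n : ℕ) (hn : 1 ≤ n) :
    (n+1+2).choose 3 + ((n+2).choose 3 + (n+2).choose 3) = (n+1)^2*(n+2)/2 := by
  obtain ⟨m, rfl⟩ : ∃ m, n = m + 1 := ⟨n - 1, by omega⟩
  have c1 := choose3 (m+1)
  have c2 := choose3 m
  obtain ⟨k, hk⟩ := Nat.even_mul_succ_self (m+2)
  have hk' : (m+2)*(m+3) = k + k := hk
  have hr : (m+1+1)^2*(m+1+2) = 2*((m+2)*k) := by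
    calc (m+1+1)^2*(m+1+2) = (m+2)*((m+2)*(m+3)) := by ring
      _ = (m+2)*(k+k) := by rw [hk']
      _ = 2*((m+2)*k) := by ring
  rw [hr, Nat.mul_div_cancel_left _ (by norm_num : 0 < 2)]
  apply Nat.eq_of_mul_eq_mul_left (show 0 < 6 by norm_num)
  calc 6 * ((m+1+1+2).choose 3 + ((m+1+2).choose 3 + (m+1+2).choose 3))
      = (m+1+3).choose 3 * 6 + 2*((m+3).choose 3 * 6) := by
        rw [show m+1+1+2 = m+1+3 from rfl, show m+1+2 = m+3 from rfl]; ring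
    _ = (m+1+3)*(m+1+2)*(m+1+1) + 2*((m+3)*(m+2)*(m+1)) := by rw [c1, c2]
    _ = 3*(m+2)*((m+2)*(m+3)) := by ring
    _ = 3*(m+2)*(k+k) := by rw [hk']
    _ = 6*((m+2)*k) := by ring

section stuff
variable {n : ℕ}

noncomputable def cH (α : Fin (n+1)) : Vv n →ₗ[ℝ] ℝ := (LinearMap.proj α).comp (LinearMap.fst ℝ _ _)
noncomputable def cV (i : Fin n) : Vv n →ₗ[ℝ] ℝ := (LinearMap.proj i).comp (LinearMap.snd ℝ _ _)

noncomputable def tri (p q r : Vv n →ₗ[ℝ] ℝ) : Vv n →ₗ[ℝ] Vv n →ₗ[ℝ] Vv n →ₗ[ℝ] ℝ :=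
  p.smulRight (q.smulRight r)

@[simp] lemma tri_apply (p q r : Vv n →ₗ[ℝ] ℝ) (X Y Z : Vv n) :
    tri p q r X Y Z = p X * (q Y * r Z) := by
  simp [tri, smul_eq_mul]

noncomputable def Bmk (S : Fin (n+1) → Fin (n+1) → Fin (n+1) → ℝ)
    (T U : Fin n → Fin n → Fin n → ℝ) : Vv n →ₗ[ℝ] Vv n →ₗ[ℝ] Vv n →ₗ[ℝ] ℝ :=
  (∑ a, ∑ b, ∑ c, S a b c • tri (cH a) (cH b) (cH c))
  + ((∑ a, ∑ i, ∑ b, T a i b • (tri (cH a.succ) (cV i) (cH b.succ)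
        + tri (cV i) (cH a.succ) (cH b.succ)))
  + (∑ i, ∑ j, ∑ k, U i j k • tri (cV i) (cV j) (cH k.succ)))

lemma Bmk_apply (S : Fin (n+1) → Fin (n+1) → Fin (n+1) → ℝ)
    (T U : Fin n → Fin n → Fin n → ℝ) (X Y Z : Vv n) :
    Bmk S T U X Y Z =
      (∑ a, ∑ b, ∑ c, S a b c * (X.1 a * (Y.1 b * Z.1 c)))
      + ((∑ a, ∑ i, ∑ b, (T a i b * (X.1 a.succ * (Y.2 i * Z.1 b.succ))
            + T a i b * (X.2 i * (Y.1 a.succ * Z.1 b.succ))))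
      + (∑ i, ∑ j, ∑ k, U i j k * (X.2 i * (Y.2 j * Z.1 k.succ)))) := by
  simp [Bmk, LinearMap.sum_apply, LinearMap.add_apply, LinearMap.smul_apply,
    tri_apply, smul_eq_mul, mul_add, cH, cV]



def eh (α : Fin (n+1)) : Vv n := (Pi.single α 1, 0)
def ev (i : Fin n) : Vv n := (0, Pi.single i 1)

lemma Jv_apply (Y : Vv n) : Jv n Y = (0, fun i => Y.1 i.succ) := rfl
lemma Hv_apply (Y : Vv n) : Hv n Y = (Y.1, 0) := rfl

lemma Jv_eh_succ (i : Fin n) : Jv n (eh i.succ) = ev i := by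
  rw [Jv_apply]
  refine Prod.ext rfl ?_
  funext j
  simp [eh, ev, Pi.single_apply, Fin.succ_inj]

lemma Jv_eh_zero : Jv n (eh 0) = 0 := by
  rw [Jv_apply]
  refine Prod.ext rfl ?_
  funext j
  simp [eh, Pi.single_apply, Fin.succ_ne_zero]

lemma Hv_eh (a : Fin (n+1)) : Hv n (eh a) = eh a := rfl
lemma Hv_ev (i : Fin n) : Hv n (ev i) = 0 := by
  rw [Hv_apply]; exact Prod.ext rfl rfl

section helper
variable {α β γ : Type*} [Fintype α] [Fintype β] [Fintype γ] {M : Type*} [AddCommMonoid M]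

lemma swap12 (g : α → β → γ → M) :
    ∑ a, ∑ b, ∑ c, g a b c = ∑ b, ∑ a, ∑ c, g a b c := Finset.sum_comm

lemma swap23 (g : α → β → γ → M) :
    ∑ a, ∑ b, ∑ c, g a b c = ∑ a, ∑ c, ∑ b, g a b c :=
  Finset.sum_congr rfl fun _ _ => Finset.sum_comm

lemma swap13 (g : α → β → γ → M) :
    ∑ a, ∑ b, ∑ c, g a b c = ∑ c, ∑ b, ∑ a, g a b c := by
  rw [swap12, swap23 (fun b a c => g a b c), swap12 (fun b c a => g a b c)]
end helper
section stuff
variable {n : ℕ}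

variable {S : Fin (n+1) → Fin (n+1) → Fin (n+1) → ℝ} {T U : Fin n → Fin n → Fin n → ℝ}

lemma E0 (X Y Z : Vv n) (hZ : Z.1 = 0) : Bmk S T U X Y Z = 0 := by
  simp [Bmk_apply, hZ]

lemma E1 (a b c : Fin (n+1)) : Bmk S T U (eh a) (eh b) (eh c) = S a b c := by
  simp [Bmk_apply, eh, Pi.single_apply]

lemma E3a (a : Fin n) (i : Fin n) (c : Fin n) :
    Bmk S T U (eh a.succ) (ev i) (eh c.succ) = T a i c := by
  simp [Bmk_apply, eh, ev, Pi.single_apply, Fin.succ_inj]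

lemma E3b (i : Fin n) (c : Fin (n+1)) : Bmk S T U (eh 0) (ev i) (eh c) = 0 := by
  simp [Bmk_apply, eh, ev, Pi.single_apply, Fin.succ_ne_zero, (Fin.succ_ne_zero _).symm]

lemma E3c (X : Vv n) (i : Fin n) : Bmk S T U X (ev i) (eh 0) = 0 := by
  simp [Bmk_apply, eh, ev, Pi.single_apply, Fin.succ_ne_zero, (Fin.succ_ne_zero _).symm]

lemma E4a (i : Fin n) (a : Fin n) (c : Fin n) :
    Bmk S T U (ev i) (eh a.succ) (eh c.succ) = T a i c := by
  simp [Bmk_apply, eh, ev, Pi.single_apply, Fin.succ_inj]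

lemma E4b (i : Fin n) (c : Fin (n+1)) : Bmk S T U (ev i) (eh 0) (eh c) = 0 := by
  simp [Bmk_apply, eh, ev, Pi.single_apply, Fin.succ_ne_zero, (Fin.succ_ne_zero _).symm]

lemma E4c (i : Fin n) (a : Fin (n+1)) : Bmk S T U (ev i) (eh a) (eh 0) = 0 := by
  simp [Bmk_apply, eh, ev, Pi.single_apply, Fin.succ_ne_zero, (Fin.succ_ne_zero _).symm]

lemma E5a (i j c : Fin n) : Bmk S T U (ev i) (ev j) (eh c.succ) = U i j c := by
  simp [Bmk_apply, eh, ev, Pi.single_apply, Fin.succ_inj]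

lemma E5b (i j : Fin n) : Bmk S T U (ev i) (ev j) (eh 0) = 0 := by
  simp [Bmk_apply, eh, ev, Pi.single_apply, Fin.succ_ne_zero, (Fin.succ_ne_zero _).symm]

end stuff
section memb
variable {n : ℕ}

lemma Bmk_mem {S : Fin (n+1) → Fin (n+1) → Fin (n+1) → ℝ} {T U : Fin n → Fin n → Fin n → ℝ}
    (hS1 : ∀ a b c, S a b c = S b a c) (hS2 : ∀ a b c, S a b c = S a c b)
    (hT2 : ∀ a b c, T a b c = T a c b) (hT3 : ∀ a b c, T a b c = T c b a)
    (hU1 : ∀ a b c, U a b c = U b a c) (hU2 : ∀ a b c, U a b c = U a c b) :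
    Bmk S T U ∈ g2 n := by
  refine ⟨fun X Y Z => ?_, fun X Y v hv => E0 X Y v hv, fun X Y Z => ?_, fun X Y Z => ?_⟩
  · rw [Bmk_apply, Bmk_apply]
    congr 1
    · rw [swap12 (fun a b c => S a b c * (X.1 a * (Y.1 b * Z.1 c)))]
      refine Finset.sum_congr rfl fun b _ => Finset.sum_congr rfl fun a _ =>
        Finset.sum_congr rfl fun c _ => ?_
      rw [hS1 a b c]; ring
    congr 1
    · refine Finset.sum_congr rfl fun a _ => Finset.sum_congr rfl fun i _ =>
        Finset.sum_congr rfl fun b _ => ?_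
      ring
    · rw [swap12 (fun i j k => U i j k * (X.2 i * (Y.2 j * Z.1 k.succ)))]
      refine Finset.sum_congr rfl fun j _ => Finset.sum_congr rfl fun i _ =>
        Finset.sum_congr rfl fun k _ => ?_
      rw [hU1 i j k]; ring
  · rw [Jv_apply, Jv_apply, Bmk_apply, Bmk_apply]
    simp only [Pi.zero_apply, mul_zero, zero_mul, zero_add, add_zero, Finset.sum_const_zero]
    congr 1
    · refine Finset.sum_congr rfl fun a _ => ?_
      rw [Finset.sum_comm]
      refine Finset.sum_congr rfl fun p _ => Finset.sum_congr rfl fun q _ => ?_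
      rw [hT2 a q p]; ring
    · refine Finset.sum_congr rfl fun i _ => ?_
      rw [Finset.sum_comm]
      refine Finset.sum_congr rfl fun p _ => Finset.sum_congr rfl fun q _ => ?_
      rw [hU2 i q p]; ring
  · rw [Hv_apply, Hv_apply, Bmk_apply, Bmk_apply]
    simp only [Pi.zero_apply, mul_zero, zero_mul, zero_add, add_zero, Finset.sum_const_zero]
    congr 1
    · refine Finset.sum_congr rfl fun a _ => ?_
      rw [Finset.sum_comm]
      refine Finset.sum_congr rfl fun p _ => Finset.sum_congr rfl fun q _ => ?_
      rw [hS2 a q p]; ring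
    · rw [swap13 (fun a i b => T a i b * (X.2 i * (Y.1 a.succ * Z.1 b.succ)))]
      refine Finset.sum_congr rfl fun p _ => Finset.sum_congr rfl fun q _ =>
        Finset.sum_congr rfl fun r _ => ?_
      rw [hT3 r q p]; ring

end memb

section recon
variable {n : ℕ}

noncomputable def bV (n : ℕ) : Basis (Fin (n+1) ⊕ Fin n) ℝ (Vv n) :=
  (Pi.basisFun ℝ (Fin (n+1))).prod (Pi.basisFun ℝ (Fin n))

lemma bV_inl (a : Fin (n+1)) : bV n (Sum.inl a) = eh a := by
  refine Prod.ext ?_ ?_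
  · rw [bV, Basis.prod_apply_inl_fst]; simp [eh]
  · rw [bV, Basis.prod_apply_inl_snd]; rfl
lemma bV_inr (i : Fin n) : bV n (Sum.inr i) = ev i := by
  refine Prod.ext ?_ ?_
  · rw [bV, Basis.prod_apply_inr_fst]; rfl
  · rw [bV, Basis.prod_apply_inr_snd]; simp [ev]

lemma ext3 {B₁ B₂ : Vv n →ₗ[ℝ] Vv n →ₗ[ℝ] Vv n →ₗ[ℝ] ℝ}
    (h : ∀ u v w, B₁ (bV n u) (bV n v) (bV n w) = B₂ (bV n u) (bV n v) (bV n w)) :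
    B₁ = B₂ :=
  (bV n).ext fun u => (bV n).ext fun v => (bV n).ext fun w => h u v w

variable {B : Vv n →ₗ[ℝ] Vv n →ₗ[ℝ] Vv n →ₗ[ℝ] ℝ} (hB : B ∈ g2 n)

lemma bb1 (hB : B ∈ g2 n) (X : Vv n) (i : Fin n) : B X (ev i) (eh 0) = 0 := by
  have h := hB.2.2.1 X (eh i.succ) (eh 0)
  rw [Jv_eh_succ, Jv_eh_zero] at h
  simpa using h

lemma bb2 (hB : B ∈ g2 n) (i : Fin n) (c : Fin (n+1)) : B (eh 0) (ev i) (eh c) = 0 := by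
  have h4 := hB.2.2.2 (ev i) (eh 0) (eh c)
  rw [Hv_eh, Hv_eh] at h4
  rw [hB.1, h4, hB.1]
  exact bb1 hB _ i

lemma recon (hB : B ∈ g2 n) :
    Bmk (fun a b c => B (eh a) (eh b) (eh c))
      (fun a i b => B (eh a.succ) (ev i) (eh b.succ))
      (fun i j k => B (ev i) (ev j) (eh k.succ)) = B := by
  obtain ⟨h1, h2, h3, h4⟩ := hB
  apply ext3
  rintro (a | i) (b | j) (c | k) <;> simp only [bV_inl, bV_inr]
  · rw [E1]
  · rw [E0 _ _ _ rfl]; exact (h2 (eh a) (eh b) (ev k) rfl).symm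
  · -- e, f, e
    induction a using Fin.cases with
    | zero => rw [E3b, bb2 ⟨h1, h2, h3, h4⟩]
    | succ a =>
      induction c using Fin.cases with
      | zero => rw [E3c, bb1 ⟨h1, h2, h3, h4⟩]
      | succ c => rw [E3a]
  · rw [E0 _ _ _ rfl]; exact (h2 (eh a) (ev j) (ev k) rfl).symm
  · -- f, e, e
    rw [h1]
    induction b using Fin.cases with
    | zero => rw [E4b, bb2 ⟨h1, h2, h3, h4⟩]
    | succ b =>
      induction c using Fin.cases with
      | zero => rw [E4c, bb1 ⟨h1, h2, h3, h4⟩]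
      | succ c => rw [E4a]
  · rw [E0 _ _ _ rfl]; exact (h2 (ev i) (eh b) (ev k) rfl).symm
  · -- f, f, e
    induction c using Fin.cases with
    | zero => rw [E5b, bb1 ⟨h1, h2, h3, h4⟩]
    | succ c => rw [E5a]
  · rw [E0 _ _ _ rfl]; exact (h2 (ev i) (ev j) (ev k) rfl).symm

end recon

section equivpart
variable {n : ℕ}

lemma memS {B : Vv n →ₗ[ℝ] Vv n →ₗ[ℝ] Vv n →ₗ[ℝ] ℝ} (hB : B ∈ g2 n) :
    (fun a b c => B (eh a) (eh b) (eh c)) ∈ Sym3 (n+1) := by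
  obtain ⟨h1, h2, h3, h4⟩ := hB
  refine ⟨fun a b c => h1 _ _ _, fun a b c => ?_⟩
  have h := h4 (eh a) (eh b) (eh c)
  rwa [Hv_eh, Hv_eh] at h

lemma memT {B : Vv n →ₗ[ℝ] Vv n →ₗ[ℝ] Vv n →ₗ[ℝ] ℝ} (hB : B ∈ g2 n) :
    (fun a i b => B (eh a.succ) (ev i) (eh b.succ)) ∈ Sym3 n := by
  obtain ⟨h1, h2, h3, h4⟩ := hB
  have s23 : ∀ a i b : Fin n, B (eh a.succ) (ev i) (eh b.succ)
      = B (eh a.succ) (ev b) (eh i.succ) := by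
    intro a i b
    have h := h3 (eh a.succ) (eh i.succ) (eh b.succ)
    rwa [Jv_eh_succ, Jv_eh_succ] at h
  have t13 : ∀ a i b : Fin n, B (eh a.succ) (ev i) (eh b.succ)
      = B (eh b.succ) (ev i) (eh a.succ) := by
    intro a i b
    have h := h4 (ev i) (eh a.succ) (eh b.succ)
    rw [Hv_eh, Hv_eh] at h
    exact (h1 _ _ _).trans (h.trans (h1 _ _ _))
  exact ⟨fun a i b => (s23 a i b).trans ((t13 a b i).trans (s23 i b a)), s23⟩

lemma memU {B : Vv n →ₗ[ℝ] Vv n →ₗ[ℝ] Vv n →ₗ[ℝ] ℝ} (hB : B ∈ g2 n) :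
    (fun i j k => B (ev i) (ev j) (eh k.succ)) ∈ Sym3 n := by
  obtain ⟨h1, h2, h3, h4⟩ := hB
  refine ⟨fun i j k => h1 _ _ _, fun i j k => ?_⟩
  have h := h3 (ev i) (eh j.succ) (eh k.succ)
  rwa [Jv_eh_succ, Jv_eh_succ] at h

noncomputable def Fwd (n : ℕ) : g2 n →ₗ[ℝ] (Sym3 (n+1) × Sym3 n × Sym3 n) where
  toFun B :=
    (⟨fun a b c => B.1 (eh a) (eh b) (eh c), memS B.2⟩,
     ⟨fun a i b => B.1 (eh a.succ) (ev i) (eh b.succ), memT B.2⟩,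
     ⟨fun i j k => B.1 (ev i) (ev j) (eh k.succ), memU B.2⟩)
  map_add' A B := by
    refine Prod.ext ?_ (Prod.ext ?_ ?_) <;> apply Subtype.ext <;> funext a b c <;>
      simp [Submodule.coe_add]
  map_smul' r A := by
    refine Prod.ext ?_ (Prod.ext ?_ ?_) <;> apply Subtype.ext <;> funext a b c <;>
      simp [Submodule.coe_smul]

noncomputable def Bwd (n : ℕ) (p : Sym3 (n+1) × Sym3 n × Sym3 n) : g2 n :=
  ⟨Bmk p.1.1 p.2.1.1 p.2.2.1,
   Bmk_mem p.1.2.1 p.1.2.2 p.2.1.2.2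
     (fun a b c => (p.2.1.2.1 a b c).trans ((p.2.1.2.2 b a c).trans (p.2.1.2.1 b c a)))
     p.2.2.2.1 p.2.2.2.2⟩

lemma fwd_bij (n : ℕ) : Function.Bijective (Fwd n) := by
  constructor
  · apply Function.LeftInverse.injective (g := Bwd n)
    intro B
    exact Subtype.ext (recon B.2)
  · apply Function.RightInverse.surjective (g := Bwd n)
    intro p
    refine Prod.ext ?_ (Prod.ext ?_ ?_) <;> apply Subtype.ext
    · funext a b c; exact E1 a b c
    · funext a i b; exact E3a a i b
    · funext i j k; exact E5a i j k

end equivpart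

/-- The kernel `g²(P)` of the first prolongation `σ²(P)` of the symbol of the
operator `P = (d_J, d_h)` has dimension `(n+1)²(n+2)/2` over `ℝ`. -/
theorem stmt2 (n : ℕ) (hn : 1 ≤ n) :
    Module.finrank ℝ (g2 n) = (n + 1) ^ 2 * (n + 2) / 2 := by
  rw [(LinearEquiv.ofBijective (Fwd n) (fwd_bij n)).finrank_eq, Module.finrank_prod,
    Module.finrank_prod, finrank_Sym3, finrank_Sym3]
  exact arith n hn
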